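/- Let a and b be positive integers, let ι be a nonempty finite set, and let (a_τ)_{τ∈ι} and (b_τ)_{τ∈ι} be families of integers satisfying 0 ≤ 2a_τ < a and 0 ≤ 2b_τ < b for all τ ∈ ι. Suppose that the two multisets, indexed by all subsets J of ι, { Σ_{τ∈J} a_τ + Σ_{τ∈ι∖J} (a − a_τ) : J ⊆ ι } and { Σ_{τ∈J} b_τ + Σ_{τ∈ι∖J} (b − b_τ) : J ⊆ ι } are equal (with multiplicities). Then a = b and the multisets {a_τ : τ ∈ ι} and {b_τ : τ ∈ ι} are equal (with multiplicities). -/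

import Mathlib

open Polynomial

private noncomputable def PP (s : Multiset ℕ) : ℤ[X] :=
  (s.map (fun m => (1 + X ^ m : ℤ[X]))).prod

private lemma PP_zero : PP 0 = 1 := by simp [PP]

private lemma PP_cons (m : ℕ) (s : Multiset ℕ) : PP (m ::ₘ s) = (1 + X ^ m) * PP s := by
  simp [PP]

private lemma coeff_onePow_mul (m k : ℕ) (Q : ℤ[X]) :
    ((1 + X ^ m) * Q).coeff k = Q.coeff k + if m ≤ k then Q.coeff (k - m) else 0 := by
  rw [add_mul, one_mul, coeff_add, mul_comm, coeff_mul_X_pow']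

private lemma PP_coeff_zero (s : Multiset ℕ) (hs : ∀ m ∈ s, 0 < m) : (PP s).coeff 0 = 1 := by
  induction s using Multiset.induction with
  | empty => simp [PP_zero]
  | cons m s ih =>
    rw [PP_cons, mul_coeff_zero, ih (fun m' hm' => hs m' (Multiset.mem_cons_of_mem hm')), mul_one,
      coeff_add, coeff_one, coeff_X_pow, if_pos rfl,
      if_neg (by have := hs m (Multiset.mem_cons_self m s); omega), add_zero]

private lemma PP_coeff_nonneg (s : Multiset ℕ) (k : ℕ) : 0 ≤ (PP s).coeff k := by
  induction s using Multiset.induction generalizing k with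
  | empty => simp [PP_zero, coeff_one]; positivity
  | cons m s ih =>
    rw [PP_cons, coeff_onePow_mul]
    have := ih k
    have := ih (k - m)
    split <;> omega

private lemma PP_coeff_lt (s : Multiset ℕ) (k : ℕ) (hk : 0 < k) (h : ∀ m ∈ s, k < m) :
    (PP s).coeff k = 0 := by
  induction s using Multiset.induction with
  | empty => simp [PP_zero, coeff_one]; omega
  | cons m s ih =>
    rw [PP_cons, coeff_onePow_mul, ih (fun m' hm' => h m' (Multiset.mem_cons_of_mem hm')),
      if_neg (by have := h m (Multiset.mem_cons_self m s); omega), add_zero]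

private lemma PP_coeff_min (s : Multiset ℕ) (hs : ∀ m ∈ s, 0 < m) (m : ℕ) (hm : m ∈ s) :
    0 < (PP s).coeff m := by
  obtain ⟨s', rfl⟩ : ∃ s', s = m ::ₘ s' := ⟨s.erase m, (Multiset.cons_erase hm).symm⟩
  rw [PP_cons, coeff_onePow_mul, if_pos le_rfl, Nat.sub_self,
    PP_coeff_zero s' (fun m' hm' => hs m' (Multiset.mem_cons_of_mem hm'))]
  have := PP_coeff_nonneg s' m
  omega

private lemma multiset_min (t : Multiset ℕ) (ht : t ≠ 0) : ∃ m ∈ t, ∀ m' ∈ t, m ≤ m' := by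
  obtain ⟨m, hm⟩ := Multiset.exists_mem_of_ne_zero ht
  have hne : t.toFinset.Nonempty := ⟨m, Multiset.mem_toFinset.mpr hm⟩
  exact ⟨t.toFinset.min' hne, Multiset.mem_toFinset.mp (t.toFinset.min'_mem hne),
    fun m' hm' => t.toFinset.min'_le m' (Multiset.mem_toFinset.mpr hm')⟩

private lemma key (n : ℕ) : ∀ (s t : Multiset ℕ), s.card = n →
    (∀ m ∈ s, 0 < m) → (∀ m ∈ t, 0 < m) → PP s = PP t → s = t := by
  induction n with
  | zero =>
    intro s t hcard hs ht h
    rw [Multiset.card_eq_zero] at hcard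
    subst hcard
    by_contra hne
    obtain ⟨m, hm, -⟩ := multiset_min t (Ne.symm hne)
    have h1 := PP_coeff_min t ht m hm
    rw [← h, PP_zero, coeff_one, if_neg (by have := ht m hm; omega)] at h1
    omega
  | succ n ih =>
    intro s t hcard hs ht h
    have hsne : s ≠ 0 := by rintro rfl; simp at hcard
    obtain ⟨ms, hms, hmins⟩ := multiset_min s hsne
    have htne : t ≠ 0 := by
      rintro rfl
      have h1 := PP_coeff_min s hs ms hms
      rw [h, PP_zero, coeff_one, if_neg (by have := hs ms hms; omega)] at h1
      omega
    obtain ⟨mt, hmt, hmint⟩ := multiset_min t htne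
    have heq : ms = mt := by
      by_contra hne
      rcases Nat.lt_or_ge ms mt with hlt | hge
      · have h1 := PP_coeff_min s hs ms hms
        rw [h, PP_coeff_lt t ms (hs ms hms) (fun m' hm' => lt_of_lt_of_le hlt (hmint m' hm'))] at h1
        omega
      · have hlt : mt < ms := by omega
        have h1 := PP_coeff_min t ht mt hmt
        rw [← h, PP_coeff_lt s mt (ht mt hmt) (fun m' hm' => lt_of_lt_of_le hlt (hmins m' hm'))] at h1
        omega
    subst heq
    have hse : s = ms ::ₘ s.erase ms := (Multiset.cons_erase hms).symm
    have hte : t = ms ::ₘ t.erase ms := (Multiset.cons_erase hmt).symm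
    rw [hse, hte, PP_cons, PP_cons] at h
    have hX : (1 + X ^ ms : ℤ[X]) ≠ 0 := fun hc => by
      have := congrArg (Polynomial.eval 1) hc
      simp at this
    have h2 : PP (s.erase ms) = PP (t.erase ms) := mul_left_cancel₀ hX h
    have := ih (s.erase ms) (t.erase ms)
      (by rw [hse] at hcard; simp at hcard; omega)
      (fun m hm => hs m (Multiset.mem_of_mem_erase hm))
      (fun m hm => ht m (Multiset.mem_of_mem_erase hm)) h2
    rw [hse, hte, this]


/-- Let `a, b` be positive integers, `ι` a nonempty finite set, and
`(A τ)`, `(B τ)` integers with `0 ≤ 2 A τ < a` and `0 ≤ 2 B τ < b`. If the multisets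
`{ Σ_{τ∈J} A τ + Σ_{τ∉J} (a − A τ) : J ⊆ ι }` and
`{ Σ_{τ∈J} B τ + Σ_{τ∉J} (b − B τ) : J ⊆ ι }` (indexed by all subsets `J` of `ι`, with
multiplicities) are equal, then `a = b` and the multisets `{A τ}` and `{B τ}` are equal. -/
theorem weights_eq_of_multiset_eq
    {ι : Type*} [Fintype ι] [DecidableEq ι] [Nonempty ι]
    (a b : ℤ) (ha : 0 < a) (hb : 0 < b)
    (A B : ι → ℤ)
    (hA : ∀ τ, 0 ≤ 2 * A τ ∧ 2 * A τ < a)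
    (hB : ∀ τ, 0 ≤ 2 * B τ ∧ 2 * B τ < b)
    (h : Multiset.map
        (fun J : Finset ι => (∑ τ ∈ J, A τ) + ∑ τ ∈ Jᶜ, (a - A τ))
        (Finset.univ : Finset (Finset ι)).val
      = Multiset.map
        (fun J : Finset ι => (∑ τ ∈ J, B τ) + ∑ τ ∈ Jᶜ, (b - B τ))
        (Finset.univ : Finset (Finset ι)).val) :
    a = b ∧ Multiset.map A (Finset.univ : Finset ι).val
      = Multiset.map B (Finset.univ : Finset ι).val := by
    classical
  set aN := a.toNat with haN
  set bN := b.toNat with hbN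
  set α : ι → ℕ := fun τ => (A τ).toNat with hα
  set β : ι → ℕ := fun τ => (B τ).toNat with hβ
  have hcastA : ∀ τ, (α τ : ℤ) = A τ := fun τ => Int.toNat_of_nonneg (by have := (hA τ).1; omega)
  have hcastB : ∀ τ, (β τ : ℤ) = B τ := fun τ => Int.toNat_of_nonneg (by have := (hB τ).1; omega)
  have hcasta : (aN : ℤ) = a := Int.toNat_of_nonneg ha.le
  have hcastb : (bN : ℤ) = b := Int.toNat_of_nonneg hb.le
  have hAlt : ∀ τ, 2 * α τ < aN := by
    intro τ; have := (hA τ).2; have := hcastA τ; have := hcasta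
    omega
  have hBlt : ∀ τ, 2 * β τ < bN := by
    intro τ; have := (hB τ).2; have := hcastB τ; have := hcastb
    omega
  -- polynomial identity
  have hgen : ∀ (c : ℤ) (cN : ℕ) (C : ι → ℤ) (γ : ι → ℕ), (cN : ℤ) = c →
      (∀ τ, (γ τ : ℤ) = C τ) → (∀ τ, 2 * γ τ < cN) →
      ∑ J : Finset ι, (X : ℤ[X]) ^ ((∑ τ ∈ J, C τ) + ∑ τ ∈ Jᶜ, (c - C τ)).toNat
        = X ^ (∑ τ, γ τ) * PP (Multiset.map (fun τ => cN - 2 * γ τ) Finset.univ.val) := by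
    intro c cN C γ hc hγ hlt
    have hstep1 : ∀ J : Finset ι,
        ((∑ τ ∈ J, C τ) + ∑ τ ∈ Jᶜ, (c - C τ)).toNat
          = (∑ τ ∈ J, γ τ) + ∑ τ ∈ Jᶜ, (cN - γ τ) := by
      intro J
      have : (∑ τ ∈ J, C τ) + ∑ τ ∈ Jᶜ, (c - C τ)
          = (((∑ τ ∈ J, γ τ) + ∑ τ ∈ Jᶜ, (cN - γ τ) : ℕ) : ℤ) := by
        rw [Nat.cast_add, Nat.cast_sum, Nat.cast_sum]
        refine congrArg₂ (· + ·) (Finset.sum_congr rfl fun τ _ => (hγ τ).symm)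
          (Finset.sum_congr rfl fun τ _ => ?_)
        rw [Nat.cast_sub (by have := hlt τ; omega), hc, hγ τ]
      rw [this, Int.toNat_natCast]
    calc ∑ J : Finset ι, (X : ℤ[X]) ^ ((∑ τ ∈ J, C τ) + ∑ τ ∈ Jᶜ, (c - C τ)).toNat
        = ∑ J : Finset ι, ((∏ τ ∈ J, (X:ℤ[X]) ^ γ τ) * ∏ τ ∈ Jᶜ, (X:ℤ[X]) ^ (cN - γ τ)) := by
          refine Finset.sum_congr rfl fun J _ => ?_
          rw [hstep1 J, pow_add, Finset.prod_pow_eq_pow_sum, Finset.prod_pow_eq_pow_sum]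
      _ = ∏ τ, ((X:ℤ[X]) ^ γ τ + X ^ (cN - γ τ)) := by
          rw [Finset.prod_add]
          rw [Finset.powerset_univ]
          refine Finset.sum_congr rfl fun J _ => ?_
          rw [Finset.compl_eq_univ_sdiff]
      _ = ∏ τ, ((X:ℤ[X]) ^ γ τ * (1 + X ^ (cN - 2 * γ τ))) := by
          refine Finset.prod_congr rfl fun τ _ => ?_
          rw [mul_add, mul_one, ← pow_add,
            show cN - γ τ = γ τ + (cN - 2 * γ τ) from by have := hlt τ; omega]
      _ = X ^ (∑ τ, γ τ) * PP (Multiset.map (fun τ => cN - 2 * γ τ) Finset.univ.val) := by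
          rw [Finset.prod_mul_distrib, Finset.prod_pow_eq_pow_sum]
          congr 1
          rw [PP, Multiset.map_map]
          rfl
  have hsum : ∑ J : Finset ι, (X : ℤ[X]) ^ ((∑ τ ∈ J, A τ) + ∑ τ ∈ Jᶜ, (a - A τ)).toNat
      = ∑ J : Finset ι, (X : ℤ[X]) ^ ((∑ τ ∈ J, B τ) + ∑ τ ∈ Jᶜ, (b - B τ)).toNat := by
    rw [Finset.sum_eq_multiset_sum, Finset.sum_eq_multiset_sum]
    have := congrArg (Multiset.map (fun z : ℤ => (X : ℤ[X]) ^ z.toNat)) h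
    rw [Multiset.map_map, Multiset.map_map] at this
    rw [show (fun J : Finset ι => (X:ℤ[X]) ^ ((∑ τ ∈ J, A τ) + ∑ τ ∈ Jᶜ, (a - A τ)).toNat)
      = (fun z : ℤ => (X : ℤ[X]) ^ z.toNat) ∘ (fun J : Finset ι => (∑ τ ∈ J, A τ) + ∑ τ ∈ Jᶜ, (a - A τ)) from rfl]
    rw [show (fun J : Finset ι => (X:ℤ[X]) ^ ((∑ τ ∈ J, B τ) + ∑ τ ∈ Jᶜ, (b - B τ)).toNat)
      = (fun z : ℤ => (X : ℤ[X]) ^ z.toNat) ∘ (fun J : Finset ι => (∑ τ ∈ J, B τ) + ∑ τ ∈ Jᶜ, (b - B τ)) from rfl]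
    rw [this]
  rw [hgen a aN A α hcasta hcastA hAlt, hgen b bN B β hcastb hcastB hBlt] at hsum
  set sA : Multiset ℕ := Multiset.map (fun τ => aN - 2 * α τ) Finset.univ.val with hsA
  set sB : Multiset ℕ := Multiset.map (fun τ => bN - 2 * β τ) Finset.univ.val with hsB
  set SA := ∑ τ, α τ with hSA
  set SB := ∑ τ, β τ with hSB
  have hposA : ∀ m ∈ sA, 0 < m := by
    intro m hm
    rw [hsA, Multiset.mem_map] at hm
    obtain ⟨τ, -, rfl⟩ := hm
    have := hAlt τ; omega
  have hposB : ∀ m ∈ sB, 0 < m := by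
    intro m hm
    rw [hsB, Multiset.mem_map] at hm
    obtain ⟨τ, -, rfl⟩ := hm
    have := hBlt τ; omega
  -- SA = SB
  have hSAB : SA = SB := by
    by_contra hne
    rcases Nat.lt_or_ge SA SB with hlt | hge
    · have h1 := congrArg (fun p => Polynomial.coeff p SA) hsum
      rw [mul_comm, coeff_mul_X_pow', if_pos le_rfl, Nat.sub_self, PP_coeff_zero sA hposA,
        mul_comm, coeff_mul_X_pow', if_neg (by omega)] at h1
      exact one_ne_zero h1
    · have hlt : SB < SA := by omega
      have h1 := congrArg (fun p => Polynomial.coeff p SB) hsum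
      rw [mul_comm, coeff_mul_X_pow', if_neg (by omega), mul_comm, coeff_mul_X_pow',
        if_pos le_rfl, Nat.sub_self, PP_coeff_zero sB hposB] at h1
      exact zero_ne_one h1
  rw [hSAB] at hsum
  have hPP : PP sA = PP sB := mul_left_cancel₀ (pow_ne_zero _ X_ne_zero) hsum
  have hcard : sA.card = sB.card := by rw [hsA, hsB, Multiset.card_map, Multiset.card_map]
  have hms : sA = sB := key sA.card sA sB rfl hposA hposB hPP
  -- a = b
  have hsumA : (sA.map (fun m : ℕ => (m : ℤ))).sum = (Fintype.card ι : ℤ) * a - 2 * ∑ τ, A τ := by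
    rw [hsA, Multiset.map_map]
    rw [show Multiset.sum (Multiset.map ((fun m : ℕ => (m:ℤ)) ∘ fun τ => aN - 2 * α τ) Finset.univ.val)
      = ∑ τ : ι, (((aN - 2 * α τ : ℕ) : ℤ)) from rfl]
    have : ∀ τ : ι, ((aN - 2 * α τ : ℕ) : ℤ) = a - 2 * A τ := by
      intro τ
      have h1 := hAlt τ
      rw [Nat.cast_sub (by omega), hcasta]
      push_cast [hcastA τ]
      ring
    rw [Finset.sum_congr rfl fun τ _ => this τ, Finset.sum_sub_distrib, Finset.sum_const,
      Finset.card_univ, ← Finset.mul_sum, nsmul_eq_mul]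
  have hsumB : (sB.map (fun m : ℕ => (m : ℤ))).sum = (Fintype.card ι : ℤ) * b - 2 * ∑ τ, B τ := by
    rw [hsB, Multiset.map_map]
    rw [show Multiset.sum (Multiset.map ((fun m : ℕ => (m:ℤ)) ∘ fun τ => bN - 2 * β τ) Finset.univ.val)
      = ∑ τ : ι, (((bN - 2 * β τ : ℕ) : ℤ)) from rfl]
    have : ∀ τ : ι, ((bN - 2 * β τ : ℕ) : ℤ) = b - 2 * B τ := by
      intro τ
      have h1 := hBlt τ
      rw [Nat.cast_sub (by omega), hcastb]
      push_cast [hcastB τ]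
      ring
    rw [Finset.sum_congr rfl fun τ _ => this τ, Finset.sum_sub_distrib, Finset.sum_const,
      Finset.card_univ, ← Finset.mul_sum, nsmul_eq_mul]
  have hSintA : (SA : ℤ) = ∑ τ, A τ := by
    rw [hSA, Nat.cast_sum]
    exact Finset.sum_congr rfl fun τ _ => hcastA τ
  have hSintB : (SB : ℤ) = ∑ τ, B τ := by
    rw [hSB, Nat.cast_sum]
    exact Finset.sum_congr rfl fun τ _ => hcastB τ
  have hab : a = b := by
    have h1 : (sA.map (fun m : ℕ => (m : ℤ))).sum = (sB.map (fun m : ℕ => (m : ℤ))).sum := by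
      rw [hms]
    rw [hsumA, hsumB, ← hSintA, ← hSintB, hSAB] at h1
    have hn : 0 < Fintype.card ι := Fintype.card_pos
    have : (Fintype.card ι : ℤ) * a = (Fintype.card ι : ℤ) * b := by omega
    exact mul_left_cancel₀ (by positivity) this
  refine ⟨hab, ?_⟩
  -- recover the multiset of A's
  have haNbN : aN = bN := by rw [haN, hbN, hab]
  have h2 := congrArg (Multiset.map (fun m : ℕ => (((aN - m) / 2 : ℕ) : ℤ))) hms
  rw [hsA, hsB, Multiset.map_map, Multiset.map_map] at h2
  calc Multiset.map A Finset.univ.val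
      = Multiset.map ((fun m : ℕ => (((aN - m) / 2 : ℕ) : ℤ)) ∘ fun τ => aN - 2 * α τ)
          Finset.univ.val := by
        refine Multiset.map_congr rfl fun τ _ => ?_
        have h1 := hAlt τ
        simp only [Function.comp_apply]
        rw [show aN - (aN - 2 * α τ) = 2 * α τ by omega, Nat.mul_div_cancel_left _ two_pos,
          hcastA τ]
    _ = Multiset.map ((fun m : ℕ => (((aN - m) / 2 : ℕ) : ℤ)) ∘ fun τ => bN - 2 * β τ)
          Finset.univ.val := h2
    _ = Multiset.map B Finset.univ.val := by
        refine Multiset.map_congr rfl fun τ _ => ?_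
        have h1 := hBlt τ
        simp only [Function.comp_apply]
        rw [haNbN, show bN - (bN - 2 * β τ) = 2 * β τ by omega, Nat.mul_div_cancel_left _ two_pos,
          hcastB τ]
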